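/- Let 0 ≤ a < b ≤ 1, 1 ≤ p < ∞, and s ∈ (0,1] with sp > 1. Then there exists a constant C = C(s, p, a, b) > 0 such that for every M > 0 and every Lipschitz function u : [0, M] → ℝ with u(0) = 0, one has ∫₀^M |u(x)|^p / x^{sp} dx ≤ C ∫₀^M ∫_{ax}^{bx} |u(y) - u(x)|^p / x^{sp+1} dy dx. -/

import Mathlib

open MeasureTheory
open scoped ENNReal NNReal


-- convexity two-point lemma
lemma aux_two_point {p : ℝ} (hp : 1 ≤ p) {l A B : ℝ} (hl0 : 0 < l) (hl1 : l < 1)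
    (hA : 0 ≤ A) (hB : 0 ≤ B) :
    (A + B) ^ p ≤ l ^ (1 - p) * A ^ p + (1 - l) ^ (1 - p) * B ^ p := by
  have hl1' : 0 < 1 - l := by linarith
  have h := Real.rpow_arith_mean_le_arith_mean_rpow (Finset.univ : Finset (Fin 2))
    ![l, 1 - l] ![A / l, B / (1 - l)]
    (by intro i _; fin_cases i <;> simp <;> linarith)
    (by simp [Fin.sum_univ_succ])
    (by intro i _; fin_cases i <;> simp <;> positivity) hp
  simp [Fin.sum_univ_succ] at h
  have e1 : l * (A / l) + (1 - l) * (B / (1 - l)) = A + B := by field_simp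
  rw [e1] at h
  refine h.trans ?_
  have e2 : (A / l) ^ p = A ^ p / l ^ p := Real.div_rpow hA hl0.le p
  have e3 : (B / (1 - l)) ^ p = B ^ p / (1 - l) ^ p := Real.div_rpow hB hl1'.le p
  rw [e2, e3]
  have e4 : l ^ (1 - p) = l / l ^ p := by
    rw [Real.rpow_sub hl0, Real.rpow_one]
  have e5 : (1 - l) ^ (1 - p) = (1 - l) / (1 - l) ^ p := by
    rw [Real.rpow_sub hl1', Real.rpow_one]
  rw [e4, e5]; ring_nf; exact le_refl _

lemma aux_strict {a b r : ℝ} (ha : 0 ≤ a) (hab : a < b) (hb : b ≤ 1) (hr : 1 < r) :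
    b ^ r - a ^ r < r * (b - a) := by
  have hb0 : 0 < b := lt_of_le_of_lt ha hab
  have hab1 : a / b < 1 := (div_lt_one hb0).2 hab
  have ht1 : (-1 : ℝ) ≤ a / b - 1 := by
    have : 0 ≤ a / b := div_nonneg ha hb0.le
    linarith
  have ht0 : a / b - 1 ≠ 0 := by intro h; nlinarith
  have h := one_add_mul_self_lt_rpow_one_add ht1 ht0 hr
  rw [add_sub_cancel] at h
  -- h : 1 + r * (a/b - 1) < (a/b)^r
  have hpow : (a / b) ^ r = a ^ r / b ^ r := Real.div_rpow ha hb0.le r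
  rw [hpow] at h
  have hbr : 0 < b ^ r := Real.rpow_pos_of_pos hb0 r
  have h2 : b ^ r * (1 + r * (a / b - 1)) < a ^ r := by
    calc b ^ r * (1 + r * (a / b - 1)) < b ^ r * (a ^ r / b ^ r) := by
          exact (mul_lt_mul_iff_right₀ hbr).2 h
      _ = a ^ r := by field_simp
  have hb1 : b ^ (r - 1) ≤ 1 := Real.rpow_le_one hb0.le hb (by linarith)
  have hbr1 : b ^ r = b ^ (r - 1) * b := by
    rw [Real.rpow_sub hb0, Real.rpow_one]; field_simp
  have e : b ^ r * (1 + r * (a / b - 1)) = b ^ r - r * b ^ (r - 1) * (b - a) := by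
    rw [hbr1]; field_simp; ring
  rw [e] at h2
  -- b^r - a^r < r * b^(r-1) * (b-a)
  have h3 : r * b ^ (r - 1) * (b - a) ≤ r * (b - a) := by
    have hr0 : (0:ℝ) < r := by linarith
    have h4 : b ^ (r - 1) * (r * (b - a)) ≤ 1 * (r * (b - a)) :=
      mul_le_mul_of_nonneg_right hb1 (by nlinarith)
    nlinarith [h4]
  linarith

lemma aux_Ioi {r : ℝ} (hr : 0 < r) {c : ℝ} (hc : 0 < c) :
    ∫⁻ x in Set.Ioi c, ENNReal.ofReal (x ^ (-(r+1))) = ENNReal.ofReal (c ^ (-r) / r) := by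
  have hint : IntegrableOn (fun x : ℝ => x ^ (-(r+1))) (Set.Ioi c) :=
    integrableOn_Ioi_rpow_of_lt (by linarith) hc
  have hnn : 0 ≤ᵐ[volume.restrict (Set.Ioi c)] fun x : ℝ => x ^ (-(r+1)) := by
    filter_upwards [ae_restrict_mem measurableSet_Ioi] with x hx
    exact Real.rpow_nonneg (le_of_lt (hc.trans hx)) _
  rw [← ofReal_integral_eq_lintegral_ofReal hint hnn,
    integral_Ioi_rpow_of_lt (by linarith) hc]
  congr 1
  have : -(r+1) + 1 = -r := by ring
  rw [this]
  field_simp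

lemma aux_Ioc {r : ℝ} (hr : 0 < r) {c d : ℝ} (hc : 0 < c) (hcd : c ≤ d) :
    ∫⁻ x in Set.Ioc c d, ENNReal.ofReal (x ^ (-(r+1))) =
      ENNReal.ofReal ((c ^ (-r) - d ^ (-r)) / r) := by
  have hco : ContinuousOn (fun x : ℝ => x ^ (-(r+1))) (Set.Icc c d) := by
    apply ContinuousOn.rpow_const continuousOn_id
    intro x hx
    exact Or.inl (ne_of_gt (lt_of_lt_of_le hc hx.1))
  have hint : IntegrableOn (fun x : ℝ => x ^ (-(r+1))) (Set.Ioc c d) :=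
    (hco.integrableOn_Icc).mono_set Set.Ioc_subset_Icc_self
  have hnn : 0 ≤ᵐ[volume.restrict (Set.Ioc c d)] fun x : ℝ => x ^ (-(r+1)) := by
    filter_upwards [ae_restrict_mem measurableSet_Ioc] with x hx
    exact Real.rpow_nonneg (le_of_lt (hc.trans hx.1)) _
  rw [← ofReal_integral_eq_lintegral_ofReal hint hnn]
  congr 1
  rw [← intervalIntegral.integral_of_le hcd]
  rw [integral_rpow]
  · have h1 : -(r+1) + 1 = -r := by ring
    rw [h1, div_neg, ← neg_div, neg_sub]
  · right
    constructor
    · intro h; linarith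
    · rw [Set.uIcc_of_le hcd]
      intro h
      exact absurd h.1 (not_le.2 hc)

set_option maxHeartbeats 1000000 in
/-- One-dimensional nonlocal Hardy-type inequality: for `0 ≤ a < b ≤ 1`, `p ≥ 1`,
`s ∈ (0,1]` with `sp > 1`, there is `C > 0` such that for every `M > 0` and every
Lipschitz `u : [0,M] → ℝ` with `u 0 = 0`,
`∫₀^M |u x|^p / x^{sp} dx ≤ C ∫₀^M ∫_{ax}^{bx} |u y - u x|^p / x^{sp+1} dy dx`. -/
theorem stmt_2 (a b p s : ℝ) (ha : 0 ≤ a) (hab : a < b) (hb : b ≤ 1)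
    (hp : 1 ≤ p) (hs0 : 0 < s) (hs1 : s ≤ 1) (hsp : 1 < s * p) :
    ∃ C : ℝ, 0 < C ∧ ∀ (M : ℝ), 0 < M → ∀ (u : ℝ → ℝ) (K : NNReal),
      LipschitzOnWith K u (Set.Icc 0 M) → u 0 = 0 →
      (∫⁻ x in Set.Ioc (0:ℝ) M, ENNReal.ofReal (|u x| ^ p / x ^ (s * p))) ≤
        ENNReal.ofReal C *
          ∫⁻ x in Set.Ioc (0:ℝ) M, ∫⁻ y in Set.Ioc (a * x) (b * x),
            ENNReal.ofReal (|u y - u x| ^ p / x ^ (s * p + 1)) := by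
  have hb0 : 0 < b := lt_of_le_of_lt ha hab
  have hba : 0 < b - a := sub_pos.2 hab
  have hp0 : 0 < p := lt_of_lt_of_le one_pos hp
  set r := s * p with hrdef
  have hr1 : 1 < r := hsp
  have hr0 : 0 < r := by linarith
  set θ := (b ^ r - a ^ r) / (r * (b - a)) with hθdef
  have harlt : a ^ r < b ^ r := Real.rpow_lt_rpow ha hab hr0
  have hrba : 0 < r * (b - a) := by positivity
  have hθ0 : 0 < θ := div_pos (by linarith) hrba
  have hθ1 : θ < 1 := by
    rw [hθdef, div_lt_one hrba]
    have := aux_strict ha hab hb hr1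
    linarith
  set l := (1 + θ ^ (1/p)) / 2 with hldef
  have hθp1 : θ ^ (1/p) < 1 := Real.rpow_lt_one hθ0.le hθ1 (by positivity)
  have hθp0 : 0 < θ ^ (1/p) := Real.rpow_pos_of_pos hθ0 _
  have hl0 : 0 < l := by rw [hldef]; linarith
  have hl1 : l < 1 := by rw [hldef]; linarith
  have hlp : 0 < l ^ (p - 1) := Real.rpow_pos_of_pos hl0 _
  have hθl : θ < l ^ (p - 1) := by
    have h1 : θ ^ (1/p) < l := by rw [hldef]; linarith
    have e1 : (θ ^ (1/p)) ^ (p-1) * θ ^ (1/p) = θ := by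
      nth_rewrite 2 [← Real.rpow_one (θ ^ (1/p))]
      rw [← Real.rpow_add hθp0, sub_add_cancel, ← Real.rpow_mul hθ0.le,
        one_div_mul_cancel hp0.ne', Real.rpow_one]
    have h2 : (θ ^ (1/p)) ^ (p-1) ≤ l ^ (p-1) :=
      Real.rpow_le_rpow hθp0.le h1.le (by linarith)
    calc θ = (θ ^ (1/p)) ^ (p-1) * θ ^ (1/p) := e1.symm
      _ < l ^ (p-1) * 1 := mul_lt_mul' h2 hθp1 hθp0.le hlp
      _ = l ^ (p-1) := mul_one _
  set c1 := l ^ (1 - p) with hc1def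
  set c2 := (1 - l) ^ (1 - p) with hc2def
  have hc10 : 0 < c1 := Real.rpow_pos_of_pos hl0 _
  have hc20 : 0 < c2 := Real.rpow_pos_of_pos (by linarith) _
  set A := c1 * θ with hAdef
  have hA0 : 0 < A := mul_pos hc10 hθ0
  have hA1 : A < 1 := by
    have hc1inv : c1 = (l ^ (p - 1))⁻¹ := by
      rw [hc1def, show (1:ℝ) - p = -(p-1) by ring, Real.rpow_neg hl0.le]
    rw [hAdef, hc1inv]
    calc (l ^ (p-1))⁻¹ * θ = θ / l ^ (p-1) := by ring
      _ < 1 := (div_lt_one hlp).2 hθl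
  have h1A : 0 < 1 - A := by linarith
  refine ⟨c2 / ((b - a) * (1 - A)), by positivity, ?_⟩
  intro M hM u K hu hu0
  obtain ⟨g, hg, hgu⟩ := hu.extend_real
  have hg0 : g 0 = 0 := by
    rw [← hgu (Set.mem_Icc.2 ⟨le_refl (0:ℝ), hM.le⟩), hu0]
  have hgc : Continuous g := hg.continuous
  have hbxle : ∀ x : ℝ, x ∈ Set.Ioc (0:ℝ) M → b * x ≤ M := fun x hx =>
    le_trans (mul_le_of_le_one_left hx.1.le hb) hx.2
  have hyIcc : ∀ x : ℝ, x ∈ Set.Ioc (0:ℝ) M → ∀ y ∈ Set.Ioc (a*x) (b*x),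
      y ∈ Set.Icc (0:ℝ) M := by
    intro x hx y hy
    exact ⟨le_trans (mul_nonneg ha hx.1.le) hy.1.le, le_trans hy.2 (hbxle x hx)⟩
  have e_left : (∫⁻ x in Set.Ioc (0:ℝ) M, ENNReal.ofReal (|u x| ^ p / x ^ r)) =
      ∫⁻ x in Set.Ioc (0:ℝ) M, ENNReal.ofReal (|g x| ^ p / x ^ r) :=
    setLIntegral_congr_fun measurableSet_Ioc (fun x hx => by
      rw [hgu ⟨hx.1.le, hx.2⟩])
  have e_right : (∫⁻ x in Set.Ioc (0:ℝ) M, ∫⁻ y in Set.Ioc (a * x) (b * x),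
        ENNReal.ofReal (|u y - u x| ^ p / x ^ (r + 1))) =
      ∫⁻ x in Set.Ioc (0:ℝ) M, ∫⁻ y in Set.Ioc (a * x) (b * x),
        ENNReal.ofReal (|g y - g x| ^ p / x ^ (r + 1)) :=
    setLIntegral_congr_fun measurableSet_Ioc (fun x hx =>
      setLIntegral_congr_fun measurableSet_Ioc (fun y hy => by
        rw [hgu (hyIcc x hx y hy), hgu ⟨hx.1.le, hx.2⟩]))
  rw [e_left, e_right]
  set L := ∫⁻ x in Set.Ioc (0:ℝ) M, ENNReal.ofReal (|g x| ^ p / x ^ r) with hLdef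
  set R := ∫⁻ x in Set.Ioc (0:ℝ) M, ∫⁻ y in Set.Ioc (a * x) (b * x),
      ENNReal.ofReal (|g y - g x| ^ p / x ^ (r + 1)) with hRdef
  -- Step B : L is finite
  have hpr : (0:ℝ) ≤ p - r := by nlinarith
  have hLne : L ≠ ⊤ := by
    have hbd : L ≤ ENNReal.ofReal ((K:ℝ)^p * M^(p - r)) * volume (Set.Ioc (0:ℝ) M) := by
      rw [hLdef, ← setLIntegral_const]
      refine setLIntegral_mono' measurableSet_Ioc fun x hx => ?_
      refine ENNReal.ofReal_le_ofReal ?_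
      have hxK : |g x| ≤ (K:ℝ) * x := by
        have h := hg.dist_le_mul x 0
        rw [Real.dist_eq, Real.dist_eq, hg0, sub_zero, sub_zero] at h
        calc |g x| ≤ (K:ℝ) * |x| := h
          _ = (K:ℝ) * x := by rw [abs_of_pos hx.1]
      have h1 : |g x| ^ p ≤ ((K:ℝ)*x)^p := Real.rpow_le_rpow (abs_nonneg _) hxK hp0.le
      have h2 : ((K:ℝ)*x)^p = (K:ℝ)^p * x^p := Real.mul_rpow K.coe_nonneg hx.1.le
      have hxr : 0 < x ^ r := Real.rpow_pos_of_pos hx.1 r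
      calc |g x| ^ p / x ^ r ≤ ((K:ℝ)^p * x^p) / x ^ r := by
            rw [← h2]; gcongr
        _ = (K:ℝ)^p * x^(p - r) := by
            rw [Real.rpow_sub hx.1]; ring
        _ ≤ (K:ℝ)^p * M^(p - r) := by
            have := Real.rpow_le_rpow hx.1.le hx.2 hpr
            exact mul_le_mul_of_nonneg_left this (by positivity)
    have hvol : volume (Set.Ioc (0:ℝ) M) ≠ ⊤ := by
      rw [Real.volume_Ioc]; exact ENNReal.ofReal_ne_top
    exact ne_top_of_le_ne_top (ENNReal.mul_ne_top ENNReal.ofReal_ne_top hvol) hbd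
  -- key pointwise convexity inequality
  have hkey : ∀ x y : ℝ, |g x| ^ p ≤ c1 * |g y| ^ p + c2 * |g y - g x| ^ p := by
    intro x y
    have htr : |g x| ≤ |g y| + |g y - g x| := by
      calc |g x| = |g y + (g x - g y)| := by congr 1; ring
        _ ≤ |g y| + |g x - g y| := abs_add_le _ _
        _ = |g y| + |g y - g x| := by rw [abs_sub_comm]
    have h2 : |g x| ^ p ≤ (|g y| + |g y - g x|) ^ p :=
      Real.rpow_le_rpow (abs_nonneg _) htr hp0.le
    have h3 := aux_two_point hp hl0 hl1 (abs_nonneg (g y)) (abs_nonneg (g y - g x))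
    rw [← hc1def, ← hc2def] at h3
    exact h2.trans h3
  -- measurable sets and functions
  have hS1m : MeasurableSet {q : ℝ × ℝ | a * q.1 < q.2 ∧ q.2 ≤ b * q.1} := by
    exact (measurableSet_lt (measurable_fst.const_mul a) measurable_snd).inter
      (measurableSet_le measurable_snd (measurable_fst.const_mul b))
  have hindf : ∀ (h : ℝ × ℝ → ℝ≥0∞) (x : ℝ),
      (∫⁻ y in Set.Ioc (a*x) (b*x), h (x, y)) =
        ∫⁻ y, ({q : ℝ × ℝ | a * q.1 < q.2 ∧ q.2 ≤ b * q.1}.indicator h (x, y)) := by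
    intro h x
    rw [← lintegral_indicator measurableSet_Ioc]
    refine lintegral_congr fun y => ?_
    simp [Set.indicator_apply, Set.mem_Ioc]
  set I1 : ℝ → ℝ≥0∞ := fun x => ∫⁻ y in Set.Ioc (a*x) (b*x), ENNReal.ofReal (|g y| ^ p)
    with hI1def
  set I2 : ℝ → ℝ≥0∞ :=
    fun x => ∫⁻ y in Set.Ioc (a*x) (b*x), ENNReal.ofReal (|g y - g x| ^ p) with hI2def
  have hm1 : Measurable fun q : ℝ × ℝ => ENNReal.ofReal (|g q.2| ^ p) := by fun_prop
  have hm2 : Measurable fun q : ℝ × ℝ => ENNReal.ofReal (|g q.2 - g q.1| ^ p) := by fun_prop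
  have hI1m : Measurable I1 := by
    have : I1 = fun x => ∫⁻ y,
        ({q : ℝ × ℝ | a * q.1 < q.2 ∧ q.2 ≤ b * q.1}.indicator
          (fun q => ENNReal.ofReal (|g q.2| ^ p)) (x, y)) :=
      funext fun x => hindf (fun q => ENNReal.ofReal (|g q.2| ^ p)) x
    rw [this]
    exact Measurable.lintegral_prod_right' (hm1.indicator hS1m)
  have hI2m : Measurable I2 := by
    have : I2 = fun x => ∫⁻ y,
        ({q : ℝ × ℝ | a * q.1 < q.2 ∧ q.2 ≤ b * q.1}.indicator
          (fun q => ENNReal.ofReal (|g q.2 - g q.1| ^ p)) (x, y)) :=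
      funext fun x => hindf (fun q => ENNReal.ofReal (|g q.2 - g q.1| ^ p)) x
    rw [this]
    exact Measurable.lintegral_prod_right' (hm2.indicator hS1m)
  -- Step C : pointwise averaged estimate
  have hstepC : ∀ x ∈ Set.Ioc (0:ℝ) M,
      ENNReal.ofReal (|g x| ^ p / x ^ r) ≤
        ENNReal.ofReal (c1 / (b - a)) * (ENNReal.ofReal (x ^ (-(r+1))) * I1 x) +
        ENNReal.ofReal (c2 / (b - a)) * (ENNReal.ofReal (x ^ (-(r+1))) * I2 x) := by
    intro x hx
    have hx0 : 0 < x := hx.1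
    have hxr1 : (0:ℝ) < x ^ (r+1) := Real.rpow_pos_of_pos hx0 _
    have hvol : volume (Set.Ioc (a*x) (b*x)) = ENNReal.ofReal ((b - a) * x) := by
      rw [Real.volume_Ioc]; congr 1; ring
    have h1 : ENNReal.ofReal (|g x| ^ p) * ENNReal.ofReal ((b-a)*x) ≤
        ENNReal.ofReal c1 * I1 x + ENNReal.ofReal c2 * I2 x := by
      rw [← hvol, ← setLIntegral_const]
      have hmono : (∫⁻ _ in Set.Ioc (a*x) (b*x), ENNReal.ofReal (|g x| ^ p)) ≤
          ∫⁻ y in Set.Ioc (a*x) (b*x),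
            (ENNReal.ofReal c1 * ENNReal.ofReal (|g y| ^ p) +
             ENNReal.ofReal c2 * ENNReal.ofReal (|g y - g x| ^ p)) :=
        setLIntegral_mono' measurableSet_Ioc fun y _ => by
          rw [← ENNReal.ofReal_mul hc10.le, ← ENNReal.ofReal_mul hc20.le,
            ← ENNReal.ofReal_add (by positivity) (by positivity)]
          exact ENNReal.ofReal_le_ofReal (hkey x y)
      refine hmono.trans (le_of_eq ?_)
      rw [lintegral_add_left (by fun_prop),
        lintegral_const_mul' _ _ ENNReal.ofReal_ne_top,
        lintegral_const_mul' _ _ ENNReal.ofReal_ne_top]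
    have e1 : ENNReal.ofReal (|g x| ^ p / x ^ r) =
        (ENNReal.ofReal (|g x| ^ p) * ENNReal.ofReal ((b-a)*x)) *
          ENNReal.ofReal (((b-a) * x ^ (r+1))⁻¹) := by
      rw [← ENNReal.ofReal_mul (by positivity), ← ENNReal.ofReal_mul (by positivity)]
      congr 1
      have hxsplit : x ^ (r+1) = x ^ r * x := by
        rw [Real.rpow_add hx0, Real.rpow_one]
      rw [hxsplit]
      have hxr : (0:ℝ) < x ^ r := Real.rpow_pos_of_pos hx0 _
      field_simp
    have e2 : ∀ c : ℝ, 0 ≤ c → ∀ J : ℝ≥0∞,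
        (ENNReal.ofReal c * J) * ENNReal.ofReal (((b-a) * x ^ (r+1))⁻¹) =
          ENNReal.ofReal (c / (b - a)) * (ENNReal.ofReal (x ^ (-(r+1))) * J) := by
      intro c hc J
      rw [mul_right_comm, ← ENNReal.ofReal_mul hc]
      have : c * ((b-a) * x ^ (r+1))⁻¹ = (c / (b-a)) * x ^ (-(r+1)) := by
        rw [Real.rpow_neg hx0.le]
        field_simp
      rw [this, ENNReal.ofReal_mul (by positivity), mul_assoc]
    calc ENNReal.ofReal (|g x| ^ p / x ^ r)
        = (ENNReal.ofReal (|g x| ^ p) * ENNReal.ofReal ((b-a)*x)) *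
            ENNReal.ofReal (((b-a) * x ^ (r+1))⁻¹) := e1
      _ ≤ (ENNReal.ofReal c1 * I1 x + ENNReal.ofReal c2 * I2 x) *
            ENNReal.ofReal (((b-a) * x ^ (r+1))⁻¹) := mul_le_mul_left h1 _
      _ = ENNReal.ofReal (c1 / (b - a)) * (ENNReal.ofReal (x ^ (-(r+1))) * I1 x) +
          ENNReal.ofReal (c2 / (b - a)) * (ENNReal.ofReal (x ^ (-(r+1))) * I2 x) := by
          rw [add_mul, e2 c1 hc10.le, e2 c2 hc20.le]
  -- Step D : Tonelli bound for the averaged term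
  set D : ℝ := (b ^ r - a ^ r) / r with hDdef
  have hD0 : 0 < D := div_pos (by linarith) hr0
  set S : Set (ℝ × ℝ) :=
    {q | (0 < q.1 ∧ q.1 ≤ M) ∧ (a * q.1 < q.2 ∧ q.2 ≤ b * q.1)} with hSdef
  have hSm : MeasurableSet S := by
    exact ((measurableSet_lt measurable_const measurable_fst).inter
      (measurableSet_le measurable_fst measurable_const)).inter hS1m
  set F : ℝ × ℝ → ℝ≥0∞ :=
    fun q => S.indicator
      (fun q => ENNReal.ofReal (q.1 ^ (-(r+1))) * ENNReal.ofReal (|g q.2| ^ p)) q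
    with hFdef
  have hFm : Measurable F := by
    apply Measurable.indicator _ hSm
    fun_prop
  set T := ∫⁻ x in Set.Ioc (0:ℝ) M, (ENNReal.ofReal (x ^ (-(r+1))) * I1 x) with hTdef
  have hT1 : T = ∫⁻ x, ∫⁻ y, F (x, y) := by
    rw [hTdef, ← lintegral_indicator measurableSet_Ioc]
    refine lintegral_congr fun x => ?_
    by_cases hx : x ∈ Set.Ioc (0:ℝ) M
    · rw [Set.indicator_of_mem hx]
      have e : ∀ y : ℝ, F (x, y) =
          (Set.Ioc (a*x) (b*x)).indicator
            (fun y => ENNReal.ofReal (x ^ (-(r+1))) * ENNReal.ofReal (|g y| ^ p)) y := by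
        intro y
        simp only [hFdef]
        by_cases hy : y ∈ Set.Ioc (a*x) (b*x)
        · rw [Set.indicator_of_mem hy,
            Set.indicator_of_mem (show (x, y) ∈ S from ⟨⟨hx.1, hx.2⟩, ⟨hy.1, hy.2⟩⟩)]
        · rw [Set.indicator_of_notMem hy,
            Set.indicator_of_notMem (show (x, y) ∉ S from fun hmem => hy ⟨hmem.2.1, hmem.2.2⟩)]
      rw [lintegral_congr e, lintegral_indicator measurableSet_Ioc,
        lintegral_const_mul' _ _ ENNReal.ofReal_ne_top, hI1def]
    · rw [Set.indicator_of_notMem hx]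
      have e : ∀ y : ℝ, F (x, y) = 0 := fun y =>
        Set.indicator_of_notMem (fun hmem => hx ⟨hmem.1.1, hmem.1.2⟩) _
      simp [e]
  have hswap : (∫⁻ x, ∫⁻ y, F (x, y)) = ∫⁻ y, ∫⁻ x, F (x, y) :=
    lintegral_lintegral_swap hFm.aemeasurable
  -- inner x-integral for fixed y
  have hSym : ∀ y : ℝ, MeasurableSet {x : ℝ | (0 < x ∧ x ≤ M) ∧ (a * x < y ∧ y ≤ b * x)} := by
    intro y
    exact ((measurableSet_lt measurable_const measurable_id).inter
        (measurableSet_le measurable_id measurable_const)).inter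
      ((measurableSet_lt (measurable_id.const_mul a) measurable_const).inter
        (measurableSet_le measurable_const (measurable_id.const_mul b)))
  have hW1 : ∀ y : ℝ, (∫⁻ x, F (x, y)) =
      ENNReal.ofReal (|g y| ^ p) *
        ∫⁻ x in {x : ℝ | (0 < x ∧ x ≤ M) ∧ (a * x < y ∧ y ≤ b * x)},
          ENNReal.ofReal (x ^ (-(r+1))) := by
    intro y
    have e : ∀ x : ℝ, F (x, y) =
        {x : ℝ | (0 < x ∧ x ≤ M) ∧ (a * x < y ∧ y ≤ b * x)}.indicator
          (fun x => ENNReal.ofReal (x ^ (-(r+1))) * ENNReal.ofReal (|g y| ^ p)) x := by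
      intro x
      simp only [hFdef]
      by_cases hx : x ∈ {x : ℝ | (0 < x ∧ x ≤ M) ∧ (a * x < y ∧ y ≤ b * x)}
      · rw [Set.indicator_of_mem hx,
          Set.indicator_of_mem (show (x, y) ∈ S from ⟨⟨hx.1.1, hx.1.2⟩, ⟨hx.2.1, hx.2.2⟩⟩)]
      · rw [Set.indicator_of_notMem hx,
          Set.indicator_of_notMem
            (show (x, y) ∉ S from fun hmem => hx ⟨⟨hmem.1.1, hmem.1.2⟩, hmem.2.1, hmem.2.2⟩)]
    rw [lintegral_congr e, lintegral_indicator (hSym y),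
      lintegral_mul_const' _ _ ENNReal.ofReal_ne_top, mul_comm]
  have hWzero : ∀ y : ℝ, y ∉ Set.Ioc (0:ℝ) M →
      {x : ℝ | (0 < x ∧ x ≤ M) ∧ (a * x < y ∧ y ≤ b * x)} = ∅ := by
    intro y hy
    ext x
    simp only [Set.mem_setOf_eq, Set.mem_empty_iff_false, iff_false]
    rintro ⟨⟨hx0, hxM⟩, ⟨haxy, hybx⟩⟩
    exact hy ⟨lt_of_le_of_lt (mul_nonneg ha hx0.le) haxy,
      le_trans hybx (le_trans (mul_le_of_le_one_left hx0.le hb) hxM)⟩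
  have hWb : ∀ y ∈ Set.Ioc (0:ℝ) M,
      (∫⁻ x in {x : ℝ | (0 < x ∧ x ≤ M) ∧ (a * x < y ∧ y ≤ b * x)},
          ENNReal.ofReal (x ^ (-(r+1)))) ≤ ENNReal.ofReal (D * y ^ (-r)) := by
    intro y hy
    have hy0 : 0 < y := hy.1
    have hyb : 0 < y / b := div_pos hy0 hb0
    have hybr : (y / b) ^ (-r) = b ^ r * y ^ (-r) := by
      rw [Real.div_rpow hy0.le hb0.le, Real.rpow_neg hb0.le]
      field_simp
    by_cases ha0 : a = 0
    · have hsub : {x : ℝ | (0 < x ∧ x ≤ M) ∧ (a * x < y ∧ y ≤ b * x)} ⊆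
          Set.Ici (y / b) := by
        rintro x ⟨⟨hx0, _⟩, ⟨_, hybx⟩⟩
        exact (div_le_iff₀ hb0).2 (by linarith [mul_comm b x])
      calc (∫⁻ x in {x : ℝ | (0 < x ∧ x ≤ M) ∧ (a * x < y ∧ y ≤ b * x)},
              ENNReal.ofReal (x ^ (-(r+1))))
          ≤ ∫⁻ x in Set.Ici (y / b), ENNReal.ofReal (x ^ (-(r+1))) :=
            lintegral_mono_set hsub
        _ = ∫⁻ x in Set.Ioi (y / b), ENNReal.ofReal (x ^ (-(r+1))) :=
            (setLIntegral_congr Ioi_ae_eq_Ici).symm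
        _ = ENNReal.ofReal ((y / b) ^ (-r) / r) := aux_Ioi hr0 hyb
        _ ≤ ENNReal.ofReal (D * y ^ (-r)) := by
            refine ENNReal.ofReal_le_ofReal (le_of_eq ?_)
            rw [hybr, hDdef, ha0, Real.zero_rpow hr0.ne']
            ring
    · have ha0' : 0 < a := lt_of_le_of_ne ha (Ne.symm ha0)
      have hya : 0 < y / a := div_pos hy0 ha0'
      have hcd : y / b ≤ y / a := by
        rw [div_le_div_iff₀ hb0 ha0']
        exact mul_le_mul_of_nonneg_left hab.le hy0.le
      have hsub : {x : ℝ | (0 < x ∧ x ≤ M) ∧ (a * x < y ∧ y ≤ b * x)} ⊆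
          Set.Ico (y / b) (y / a) := by
        rintro x ⟨⟨hx0, _⟩, ⟨haxy, hybx⟩⟩
        constructor
        · exact (div_le_iff₀ hb0).2 (by linarith [mul_comm b x])
        · exact (lt_div_iff₀ ha0').2 (by linarith [mul_comm a x])
      have hyar : (y / a) ^ (-r) = a ^ r * y ^ (-r) := by
        rw [Real.div_rpow hy0.le ha0'.le, Real.rpow_neg ha0'.le]
        field_simp
      calc (∫⁻ x in {x : ℝ | (0 < x ∧ x ≤ M) ∧ (a * x < y ∧ y ≤ b * x)},
              ENNReal.ofReal (x ^ (-(r+1))))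
          ≤ ∫⁻ x in Set.Ico (y / b) (y / a), ENNReal.ofReal (x ^ (-(r+1))) :=
            lintegral_mono_set hsub
        _ = ∫⁻ x in Set.Ioc (y / b) (y / a), ENNReal.ofReal (x ^ (-(r+1))) :=
            setLIntegral_congr Ico_ae_eq_Ioc
        _ = ENNReal.ofReal (((y / b) ^ (-r) - (y / a) ^ (-r)) / r) := aux_Ioc hr0 hyb hcd
        _ ≤ ENNReal.ofReal (D * y ^ (-r)) := by
            refine ENNReal.ofReal_le_ofReal (le_of_eq ?_)
            rw [hybr, hyar, hDdef]
            ring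
  have hT : T ≤ ENNReal.ofReal D * L := by
    rw [hT1, hswap]
    calc (∫⁻ y, ∫⁻ x, F (x, y))
        ≤ ∫⁻ y, (Set.Ioc (0:ℝ) M).indicator
            (fun y => ENNReal.ofReal D * ENNReal.ofReal (|g y| ^ p / y ^ r)) y := by
          refine lintegral_mono fun y => ?_
          rw [hW1 y]
          by_cases hy : y ∈ Set.Ioc (0:ℝ) M
          · rw [Set.indicator_of_mem hy]
            refine le_trans (mul_le_mul_right (hWb y hy) _) (le_of_eq ?_)
            rw [← ENNReal.ofReal_mul (by positivity), ← ENNReal.ofReal_mul hD0.le]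
            congr 1
            rw [Real.rpow_neg hy.1.le]
            field_simp
          · rw [Set.indicator_of_notMem hy, hWzero y hy]
            simp
      _ = ∫⁻ y in Set.Ioc (0:ℝ) M,
            ENNReal.ofReal D * ENNReal.ofReal (|g y| ^ p / y ^ r) :=
          lintegral_indicator measurableSet_Ioc _
      _ = ENNReal.ofReal D * L := by
          rw [hLdef, lintegral_const_mul' _ _ ENNReal.ofReal_ne_top]
  -- reassemble : L ≤ ofReal A * L + ofReal (c2/(b-a)) * R
  have hR2 : (∫⁻ x in Set.Ioc (0:ℝ) M, (ENNReal.ofReal (x ^ (-(r+1))) * I2 x)) = R := by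
    rw [hRdef]
    refine setLIntegral_congr_fun measurableSet_Ioc
      (fun x hx => ?_)
    rw [hI2def, ← lintegral_const_mul' _ _ ENNReal.ofReal_ne_top]
    refine setLIntegral_congr_fun measurableSet_Ioc
      (fun y _ => ?_)
    rw [← ENNReal.ofReal_mul (Real.rpow_nonneg hx.1.le _)]
    congr 1
    rw [Real.rpow_neg hx.1.le, div_eq_mul_inv, mul_comm]
  have hL1 : L ≤ ENNReal.ofReal A * L + ENNReal.ofReal (c2 / (b - a)) * R := by
    calc L ≤ ∫⁻ x in Set.Ioc (0:ℝ) M,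
          (ENNReal.ofReal (c1 / (b - a)) * (ENNReal.ofReal (x ^ (-(r+1))) * I1 x) +
           ENNReal.ofReal (c2 / (b - a)) * (ENNReal.ofReal (x ^ (-(r+1))) * I2 x)) := by
          rw [hLdef]
          exact setLIntegral_mono' measurableSet_Ioc hstepC
      _ = ENNReal.ofReal (c1 / (b - a)) * T + ENNReal.ofReal (c2 / (b - a)) *
            ∫⁻ x in Set.Ioc (0:ℝ) M, (ENNReal.ofReal (x ^ (-(r+1))) * I2 x) := by
          rw [lintegral_add_left (by fun_prop),
            lintegral_const_mul' _ _ ENNReal.ofReal_ne_top,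
            lintegral_const_mul' _ _ ENNReal.ofReal_ne_top, hTdef]
      _ ≤ ENNReal.ofReal (c1 / (b - a)) * (ENNReal.ofReal D * L) +
            ENNReal.ofReal (c2 / (b - a)) * R := by
          rw [hR2]
          exact add_le_add_left (mul_le_mul_right hT _) _
      _ = ENNReal.ofReal A * L + ENNReal.ofReal (c2 / (b - a)) * R := by
          have hAeq : ENNReal.ofReal (c1 / (b - a)) * ENNReal.ofReal D =
              ENNReal.ofReal A := by
            rw [← ENNReal.ofReal_mul (div_nonneg hc10.le hba.le)]
            congr 1
            rw [hAdef, hθdef, hDdef, div_mul_div_comm, mul_div_assoc,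
              mul_comm r (b - a)]
          rw [← mul_assoc, hAeq]
  -- absorption
  have habs : ENNReal.ofReal (1 - A) * L ≤ ENNReal.ofReal (c2 / (b - a)) * R := by
    rw [ENNReal.ofReal_sub _ hA0.le, ENNReal.ofReal_one,
      ENNReal.sub_mul (fun _ _ => hLne), one_mul]
    exact tsub_le_iff_right.2 (le_trans hL1 (le_of_eq (add_comm _ _)))
  calc L = (ENNReal.ofReal (1 - A))⁻¹ * (ENNReal.ofReal (1 - A) * L) := by
        rw [← mul_assoc, ENNReal.inv_mul_cancel (ENNReal.ofReal_pos.2 h1A).ne'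
          ENNReal.ofReal_ne_top, one_mul]
    _ ≤ (ENNReal.ofReal (1 - A))⁻¹ * (ENNReal.ofReal (c2 / (b - a)) * R) :=
        mul_le_mul_right habs _
    _ = ENNReal.ofReal (c2 / ((b - a) * (1 - A))) * R := by
        rw [← ENNReal.ofReal_inv_of_pos h1A, ← mul_assoc,
          ← ENNReal.ofReal_mul (inv_nonneg.2 h1A.le)]
        have e : (1 - A)⁻¹ * (c2 / (b - a)) = c2 / ((b - a) * (1 - A)) := by
          rw [mul_comm ((1 - A)⁻¹) (c2 / (b - a)), ← div_eq_mul_inv, div_div]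
        rw [e]
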